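/- (Dzyadyk, best equidistant point) For an inconsistent system Vu = a with V ∈ ℝ^{(r+1)×r} where all D_j ≠ 0, the point u* = (Σ_j |D_j| û^j) / (Σ_j |D_j|) satisfies |⟨v^j, u*⟩ − a_j| = ρ* for all j = 1,…,r+1, where ρ* = |Σ_j (−1)^j D_j a_j| / Σ_j |D_j|; moreover ρ* is the minimal possible common residual magnitude among all equidistant points. -/
import Mathlib


/-- Dzyadyk best equidistant point: `u* = (Σ |D_j| û^j)/(Σ |D_j|)` is equidistant with
common residual `ρ* = |Σ (−1)^j D_j a_j| / Σ |D_j|`, and `ρ*` is minimal among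
all equidistant points. -/
theorem stmt_9 (r : ℕ) (V : Matrix (Fin (r + 1)) (Fin r) ℝ) (a : Fin (r + 1) → ℝ)
    (hinc : ¬∃ u : Fin r → ℝ, V.mulVec u = a)
    (D : Fin (r + 1) → ℝ) (hD : ∀ j, D j = (V.submatrix (Fin.succAbove j) id).det)
    (hDne : ∀ j, D j ≠ 0)
    (uhat : Fin (r + 1) → Fin r → ℝ)
    (huhat : ∀ j, (V.submatrix (Fin.succAbove j) id).mulVec (uhat j) =
      fun k => a (Fin.succAbove j k))
    (ustar : Fin r → ℝ)
    (hustar : ustar = (∑ j, |D j|)⁻¹ • ∑ j, |D j| • uhat j)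
    (ρstar : ℝ)
    (hρ : ρstar = |∑ j : Fin (r + 1), (-1) ^ ((j : ℕ) + 1) * D j * a j| / ∑ j, |D j|) :
    (∀ j, |(∑ i, V j i * ustar i) - a j| = ρstar) ∧
    ∀ (u : Fin r → ℝ) (ρ : ℝ), (∀ j, |(∑ i, V j i * u i) - a j| = ρ) → ρstar ≤ ρ := by
  set S : ℝ := ∑ j, |D j| with hSdef
  have hS : 0 < S := by
    refine Finset.sum_pos' (fun j _ => abs_nonneg _) ⟨0, Finset.mem_univ _, ?_⟩
    exact abs_pos.mpr (hDne 0)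
  set T : ℝ := ∑ j : Fin (r + 1), (-1) ^ ((j : ℕ) + 1) * D j * a j with hTdef
  -- key alternating identity: Σ_j (-1)^j D_j V_{j,c} = 0 for each column c
  have key : ∀ c : Fin r, ∑ j : Fin (r + 1), (-1 : ℝ) ^ (j : ℕ) * D j * V j c = 0 := by
    intro c
    set M : Matrix (Fin (r + 1)) (Fin (r + 1)) ℝ :=
      Matrix.of fun j => (Fin.snoc (V j) (V j c) : Fin (r + 1) → ℝ) with hM
    have hdet : M.det = 0 := by
      refine Matrix.det_zero_of_column_eq (i := c.castSucc) (j := Fin.last r) ?_ ?_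
      · exact Fin.ne_of_lt (Fin.castSucc_lt_last c)
      · intro k; simp [hM]
    have hexp := Matrix.det_succ_column M (Fin.last r)
    rw [hdet] at hexp
    have hsub : ∀ i : Fin (r + 1),
        (M.submatrix i.succAbove (Fin.last r).succAbove).det = D i := by
      intro i
      rw [hD i]
      congr 1
      ext m k
      simp [hM, Fin.succAbove_last]
    have h1 : (0 : ℝ) = ∑ i : Fin (r + 1), (-1 : ℝ) ^ ((i : ℕ) + r) * V i c * D i := by
      rw [hexp]
      refine Finset.sum_congr rfl fun i _ => ?_
      rw [hsub i]
      simp [hM, Fin.snoc_last, Fin.val_last]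
    have h2 : (0 : ℝ) = (-1 : ℝ) ^ r * ∑ i : Fin (r + 1), (-1 : ℝ) ^ (i : ℕ) * D i * V i c := by
      rw [h1, Finset.mul_sum]
      refine Finset.sum_congr rfl fun i _ => ?_
      rw [pow_add]; ring
    rcases mul_eq_zero.mp h2.symm with h | h
    · exact absurd h (pow_ne_zero r (by norm_num))
    · exact h
  -- residuals
  set ρf : (Fin r → ℝ) → Fin (r + 1) → ℝ :=
    fun u j => (∑ i, V j i * u i) - a j with hρf
  -- for any u, the alternating sum of residuals is constant
  have L : ∀ u : Fin r → ℝ,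
      ∑ j : Fin (r + 1), (-1 : ℝ) ^ ((j : ℕ) + 1) * D j * ρf u j = -T := by
    intro u
    have expand : ∑ j : Fin (r + 1), (-1 : ℝ) ^ ((j : ℕ) + 1) * D j * ρf u j =
        (∑ j : Fin (r + 1), (-1 : ℝ) ^ ((j : ℕ) + 1) * D j * ∑ i, V j i * u i) - T := by
      rw [hTdef, ← Finset.sum_sub_distrib]
      refine Finset.sum_congr rfl fun j _ => ?_
      simp [hρf]; ring
    rw [expand]
    have hz : (∑ j : Fin (r + 1), (-1 : ℝ) ^ ((j : ℕ) + 1) * D j * ∑ i, V j i * u i) = 0 := by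
      have : ∀ j : Fin (r + 1), (-1 : ℝ) ^ ((j : ℕ) + 1) * D j * ∑ i, V j i * u i =
          ∑ i, -((-1 : ℝ) ^ (j : ℕ) * D j * V j i) * u i := by
        intro j
        rw [Finset.mul_sum]
        refine Finset.sum_congr rfl fun i _ => ?_
        rw [pow_succ]; ring
      rw [Finset.sum_congr rfl fun j _ => this j, Finset.sum_comm]
      refine Finset.sum_eq_zero fun i _ => ?_
      have : ∑ j : Fin (r + 1), -((-1 : ℝ) ^ (j : ℕ) * D j * V j i) * u i =
          (-(∑ j : Fin (r + 1), (-1 : ℝ) ^ (j : ℕ) * D j * V j i)) * u i := by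
        rw [← Finset.sum_neg_distrib, Finset.sum_mul]
      rw [this, key i]
      ring
    rw [hz]; ring
  -- residual of uhat k at row j ≠ k vanishes
  have hzero : ∀ j k : Fin (r + 1), j ≠ k → ρf (uhat k) j = 0 := by
    intro j k hjk
    obtain ⟨m, hm⟩ := Fin.exists_succAbove_eq hjk
    have := congrFun (huhat k) m
    simp only [Matrix.mulVec, dotProduct, Matrix.submatrix_apply, id] at this
    rw [hm] at this
    simp [hρf, this]
  -- hence the diagonal residual carries the whole alternating sum
  have heps : ∀ j : Fin (r + 1),
      (-1 : ℝ) ^ ((j : ℕ) + 1) * D j * ρf (uhat j) j = -T := by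
    intro j
    have := L (uhat j)
    rwa [Finset.sum_eq_single j
      (fun k _ hk => by rw [hzero k j hk]; ring) (fun h => absurd (Finset.mem_univ j) h)] at this
  have habs : ∀ j : Fin (r + 1), |D j| * |ρf (uhat j) j| = |T| := by
    intro j
    have := congrArg abs (heps j)
    rw [abs_mul, abs_mul, abs_pow, abs_neg, abs_neg, abs_one, one_pow, one_mul] at this
    exact this
  -- residual of ustar
  have hres : ∀ j : Fin (r + 1), S * ρf ustar j = |D j| * ρf (uhat j) j := by
    intro j
    have hui : ∀ i, ustar i = S⁻¹ * ∑ k : Fin (r + 1), |D k| * uhat k i := by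
      intro i
      rw [hustar]
      simp [Finset.sum_apply, hSdef]
    have h1 : ∑ i, V j i * ustar i =
        S⁻¹ * ∑ k : Fin (r + 1), |D k| * ∑ i, V j i * uhat k i := by
      rw [Finset.mul_sum]
      calc ∑ i, V j i * ustar i
          = ∑ i, ∑ k : Fin (r + 1), S⁻¹ * (|D k| * (V j i * uhat k i)) := by
            refine Finset.sum_congr rfl fun i _ => ?_
            rw [hui i, Finset.mul_sum, Finset.mul_sum]
            refine Finset.sum_congr rfl fun k _ => ?_
            ring
        _ = ∑ k : Fin (r + 1), ∑ i, S⁻¹ * (|D k| * (V j i * uhat k i)) := Finset.sum_comm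
        _ = ∑ k : Fin (r + 1), S⁻¹ * (|D k| * ∑ i, V j i * uhat k i) := by
            refine Finset.sum_congr rfl fun k _ => ?_
            rw [Finset.mul_sum, Finset.mul_sum]
    have h2 : S * ρf ustar j =
        ∑ k : Fin (r + 1), |D k| * (∑ i, V j i * uhat k i) - S * a j := by
      simp only [hρf]
      rw [mul_sub, h1, ← mul_assoc, mul_inv_cancel₀ (ne_of_gt hS), one_mul]
    have h3 : ∑ k : Fin (r + 1), |D k| * (∑ i, V j i * uhat k i) - S * a j =
        ∑ k : Fin (r + 1), |D k| * ρf (uhat k) j := by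
      rw [hSdef, Finset.sum_mul, ← Finset.sum_sub_distrib]
      refine Finset.sum_congr rfl fun k _ => ?_
      simp [hρf]; ring
    rw [h2, h3, Finset.sum_eq_single j
      (fun k _ hk => by rw [hzero j k (Ne.symm hk)]; ring)
      (fun h => absurd (Finset.mem_univ j) h)]
  constructor
  · intro j
    have := congrArg abs (hres j)
    rw [abs_mul, abs_mul, abs_abs, abs_of_pos hS, habs j] at this
    have hval : |ρf ustar j| = |T| / S := by
      field_simp at this ⊢
      linarith [this]
    rw [hρ]
    exact hval
  · intro u ρ hu
    have hT : |T| ≤ S * ρ := by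
      have := L u
      have h1 : |T| = |∑ j : Fin (r + 1), (-1 : ℝ) ^ ((j : ℕ) + 1) * D j * ρf u j| := by
        rw [this, abs_neg]
      rw [h1]
      calc |∑ j : Fin (r + 1), (-1 : ℝ) ^ ((j : ℕ) + 1) * D j * ρf u j|
          ≤ ∑ j : Fin (r + 1), |(-1 : ℝ) ^ ((j : ℕ) + 1) * D j * ρf u j| :=
            Finset.abs_sum_le_sum_abs _ _
        _ = ∑ j : Fin (r + 1), |D j| * ρ := by
            refine Finset.sum_congr rfl fun j _ => ?_
            rw [abs_mul, abs_mul, abs_pow, abs_neg, abs_one, one_pow, one_mul]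
            rw [hu j]  -- |ρf u j| = ρ ... careful
        _ = S * ρ := by rw [hSdef, Finset.sum_mul]
    rw [hρ, div_le_iff₀ hS]
    linarith [hT]
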